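/- For all natural numbers n and m with m ≤ n, the number of m-dimensional subspaces S of (ZMod 2)^n × (ZMod 2)^n satisfying ω(x, y) = 0 for all x, y ∈ S, multiplied by ∏_{a=0}^{m−1} (2^m − 2^a), equals ∏_{a=0}^{m−1} (2^{2n−a} − 2^a). -/

import Mathlib

/-- The binary symplectic form on `(ZMod 2)^n × (ZMod 2)^n`:
`ω((u,v),(u',v')) = u·v' + u'·v` (mod 2). -/
def symp {n : ℕ} (x y : (Fin n → ZMod 2) × (Fin n → ZMod 2)) : ZMod 2 :=
  (∑ i, x.1 i * y.2 i) + (∑ i, y.1 i * x.2 i)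

namespace Stmt16

abbrev V (n : ℕ) : Type := (Fin n → ZMod 2) × (Fin n → ZMod 2)

noncomputable def B (n : ℕ) : LinearMap.BilinForm (ZMod 2) (V n) :=
  LinearMap.mk₂ (ZMod 2) (fun x y => symp x y)
    (by intro x x' y; simp [symp, Finset.sum_add_distrib, add_mul, mul_add]; ring)
    (by intro c x y; simp only [symp, Prod.smul_fst, Prod.smul_snd, Pi.smul_apply, smul_eq_mul,
        Finset.mul_sum, mul_add]
        congr 1 <;> exact Finset.sum_congr rfl (by intros; ring))
    (by intro x y y'; simp [symp, Finset.sum_add_distrib, add_mul, mul_add]; ring)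
    (by intro c x y; simp only [symp, Prod.smul_fst, Prod.smul_snd, Pi.smul_apply, smul_eq_mul,
        Finset.mul_sum, mul_add]
        congr 1 <;> exact Finset.sum_congr rfl (by intros; ring))

@[simp] lemma B_apply (n : ℕ) (x y : V n) : B n x y = symp x y := rfl

lemma symp_comm {n : ℕ} (x y : V n) : symp x y = symp y x := by
  simp [symp, add_comm]

lemma B_refl (n : ℕ) : (B n).IsRefl := fun x y h => by
  simpa [symp_comm x y] using h

lemma symp_self {n : ℕ} (x : V n) : symp x x = 0 := by
  simp [symp, CharTwo.add_self_eq_zero]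

lemma B_nondeg (n : ℕ) : (B n).Nondegenerate := by
  refine (LinearMap.IsRefl.nondegenerate_iff_separatingLeft (B_refl n)).mpr ?_
  intro x hx
  have h1 : ∀ i, x.2 i = 0 := by
    intro i
    have := hx (Pi.single i 1, 0)
    simpa [symp, Pi.single_apply, Finset.sum_ite_eq'] using this
  have h2 : ∀ i, x.1 i = 0 := by
    intro i
    have := hx (0, Pi.single i 1)
    simpa [symp, Pi.single_apply, Finset.sum_ite_eq'] using this
  exact Prod.ext (funext h2) (funext h1)

lemma finrank_V (n : ℕ) : Module.finrank (ZMod 2) (V n) = 2 * n := by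
  simp [Module.finrank_prod, two_mul]

end Stmt16

namespace Stmt16

def isoT (n k : ℕ) : Type :=
  {f : Fin k → V n // LinearIndependent (ZMod 2) f ∧ ∀ i j, symp (f i) (f j) = 0}

instance (n k : ℕ) : Finite (isoT n k) := by unfold isoT; infer_instance

lemma span_isotropic {n k : ℕ} {g : Fin k → V n} (hg : ∀ i j, symp (g i) (g j) = 0) :
    ∀ x ∈ Submodule.span (ZMod 2) (Set.range g), ∀ y ∈ Submodule.span (ZMod 2) (Set.range g),
      symp x y = 0 := by
  intro x hx y hy
  have h1 : ∀ i, B n (g i) y = 0 := by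
    intro i
    have : Submodule.span (ZMod 2) (Set.range g) ≤ LinearMap.ker (B n (g i)) := by
      rw [Submodule.span_le]
      rintro _ ⟨j, rfl⟩
      simpa using hg i j
    simpa using this hy
  have : Submodule.span (ZMod 2) (Set.range g) ≤ LinearMap.ker ((B n).flip y) := by
    rw [Submodule.span_le]
    rintro _ ⟨i, rfl⟩
    simpa using h1 i
  simpa using this hx

lemma card_submodule {n : ℕ} (W : Submodule (ZMod 2) (V n)) :
    Nat.card W = 2 ^ Module.finrank (ZMod 2) W := by
  classical
  letI : Fintype W := Fintype.ofFinite _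
  rw [Nat.card_eq_fintype_card, Module.card_eq_pow_finrank (K := ZMod 2) (V := W), ZMod.card]

end Stmt16

namespace Stmt16

noncomputable def stepPhi (n k : ℕ) (f : isoT n (k + 1)) : isoT n k := by
  refine ⟨Fin.init f.1, ?_, fun i j => f.2.2 i.castSucc j.castSucc⟩
  have := f.2.1
  rw [← Fin.snoc_init_self f.1, linearIndependent_fin_snoc] at this
  exact this.1

@[simp] lemma stepPhi_coe (n k : ℕ) (f : isoT n (k + 1)) :
    (stepPhi n k f).1 = Fin.init f.1 := rfl

noncomputable def fiberEquiv (n k : ℕ) (g : isoT n k) :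
    {f : isoT n (k + 1) // stepPhi n k f = g} ≃
      {x : V n // x ∈ (B n).orthogonal (Submodule.span (ZMod 2) (Set.range g.1))
        ∧ x ∉ Submodule.span (ZMod 2) (Set.range g.1)} where
  toFun F := by
    have hg : g.1 = Fin.init F.1.1 := (congrArg Subtype.val F.2).symm
    refine ⟨F.1.1 (Fin.last k), ?_, ?_⟩
    · rw [LinearMap.BilinForm.mem_orthogonal_iff]
      intro y hy
      rw [hg] at hy
      have : Submodule.span (ZMod 2) (Set.range (Fin.init F.1.1)) ≤
          LinearMap.ker ((B n).flip (F.1.1 (Fin.last k))) := by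
        rw [Submodule.span_le]
        rintro _ ⟨i, rfl⟩
        simpa [Fin.init] using F.1.2.2 i.castSucc (Fin.last k)
      simpa [LinearMap.BilinForm.IsOrtho] using this hy
    · rw [hg]
      have := F.1.2.1
      rw [← Fin.snoc_init_self F.1.1, linearIndependent_fin_snoc] at this
      exact this.2
  invFun x := by
    refine ⟨⟨Fin.snoc g.1 x.1, ?_, ?_⟩, ?_⟩
    · rw [linearIndependent_fin_snoc]
      exact ⟨g.2.1, x.2.2⟩
    · intro i j
      refine Fin.lastCases ?_ ?_ i <;> [skip; intro i'] <;>
        refine Fin.lastCases ?_ ?_ j <;> try intro j'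
      · simp [symp_self]
      · have := x.2.1 _ (Submodule.subset_span ⟨j', rfl⟩)
        rw [symp_comm]
        simpa [Fin.snoc, LinearMap.BilinForm.IsOrtho] using this
      · have := x.2.1 _ (Submodule.subset_span ⟨i', rfl⟩)
        simpa [Fin.snoc, LinearMap.BilinForm.IsOrtho] using this
      · simpa [Fin.snoc] using g.2.2 i' j'
    · apply Subtype.ext
      show Fin.init (Fin.snoc g.1 x.1 : Fin (k + 1) → V n) = g.1
      simp
  left_inv F := by
    apply Subtype.ext
    apply Subtype.ext
    show Fin.snoc g.1 (F.1.1 (Fin.last k)) = F.1.1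
    have hg : g.1 = Fin.init F.1.1 := (congrArg Subtype.val F.2).symm
    rw [hg, Fin.snoc_init_self]
  right_inv x := by
    apply Subtype.ext
    dsimp only
    exact Fin.snoc_last _ _

lemma card_fiber (n k : ℕ) (g : isoT n k) :
    Nat.card {x : V n // x ∈ (B n).orthogonal (Submodule.span (ZMod 2) (Set.range g.1))
        ∧ x ∉ Submodule.span (ZMod 2) (Set.range g.1)} = 2 ^ (2 * n - k) - 2 ^ k := by
  classical
  set W : Submodule (ZMod 2) (V n) := Submodule.span (ZMod 2) (Set.range g.1) with hW
  set W' := (B n).orthogonal W with hW'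
  have hle : (W : Set (V n)) ⊆ (W' : Set (V n)) := by
    intro x hx
    rw [SetLike.mem_coe, LinearMap.BilinForm.mem_orthogonal_iff]
    intro y hy
    exact span_isotropic g.2.2 y hy x hx
  have hrW : Module.finrank (ZMod 2) W = k := by
    rw [hW, finrank_span_eq_card g.2.1, Fintype.card_fin]
  have hrW' : Module.finrank (ZMod 2) W' = 2 * n - k := by
    rw [hW', LinearMap.BilinForm.finrank_orthogonal (B_nondeg n), finrank_V, hrW]
  have e : {x : V n // x ∈ W' ∧ x ∉ W} ≃ ((W' : Set (V n)) \ (W : Set (V n)) : Set (V n)) :=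
    Equiv.subtypeEquivRight (by intro x; simp [Set.mem_diff])
  rw [Nat.card_congr e, Nat.card_coe_set_eq,
    Set.ncard_diff hle (Set.toFinite _)]
  rw [← Nat.card_coe_set_eq, ← Nat.card_coe_set_eq]
  rw [show Nat.card (W' : Set (V n)) = Nat.card W' from rfl,
    show Nat.card (W : Set (V n)) = Nat.card W from rfl,
    card_submodule, card_submodule, hrW, hrW']

lemma step_card (n k : ℕ) :
    Nat.card (isoT n (k + 1)) = Nat.card (isoT n k) * (2 ^ (2 * n - k) - 2 ^ k) := by
  classical
  letI : Fintype (isoT n k) := Fintype.ofFinite _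
  rw [Nat.card_congr (Equiv.sigmaFiberEquiv (stepPhi n k)).symm]
  letI : ∀ g : isoT n k, Fintype {f : isoT n (k + 1) // stepPhi n k f = g} :=
    fun g => Fintype.ofFinite _
  rw [Nat.card_eq_fintype_card, Fintype.card_sigma]
  have : ∀ g : isoT n k, Fintype.card {f : isoT n (k + 1) // stepPhi n k f = g} =
      2 ^ (2 * n - k) - 2 ^ k := by
    intro g
    rw [← Nat.card_eq_fintype_card, Nat.card_congr (fiberEquiv n k g), card_fiber]
  simp only [this, Finset.sum_const, Finset.card_univ, smul_eq_mul, Nat.card_eq_fintype_card]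

lemma cardA (n k : ℕ) :
    Nat.card (isoT n k) = ∏ a ∈ Finset.range k, (2 ^ (2 * n - a) - 2 ^ a) := by
  induction k with
  | zero =>
    rw [Finset.range_zero, Finset.prod_empty, Nat.card_eq_one_iff_unique]
    constructor
    · exact ⟨fun a b => Subtype.ext (funext fun i => i.elim0)⟩
    · exact ⟨⟨fun i => i.elim0, linearIndependent_empty_type, fun i j => i.elim0⟩⟩
  | succ k ih =>
    rw [Finset.prod_range_succ, ← ih, step_card]

def Sub (n m : ℕ) : Type :=
  {S : Submodule (ZMod 2) (V n) //
    Module.finrank (ZMod 2) S = m ∧ ∀ x ∈ S, ∀ y ∈ S, symp x y = 0}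

instance (n : ℕ) : Finite (Submodule (ZMod 2) (V n)) :=
  Finite.of_injective (fun S => (S : Set (V n))) SetLike.coe_injective

instance (n m : ℕ) : Finite (Sub n m) := by
  unfold Sub
  infer_instance

noncomputable def PhiB (n m : ℕ) (f : isoT n m) : Sub n m :=
  ⟨Submodule.span (ZMod 2) (Set.range f.1),
    by rw [finrank_span_eq_card f.2.1, Fintype.card_fin],
    fun x hx y hy => span_isotropic f.2.2 x hx y hy⟩

noncomputable def fiberEquivB (n m : ℕ) (S : Sub n m) :
    {f : isoT n m // PhiB n m f = S} ≃
      {f' : Fin m → S.1 // LinearIndependent (ZMod 2) f'} where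
  toFun F := by
    have hS : Submodule.span (ZMod 2) (Set.range F.1.1) = S.1 := congrArg Subtype.val F.2
    refine ⟨fun i => ⟨F.1.1 i, ?_⟩, ?_⟩
    · rw [← hS]; exact Submodule.subset_span ⟨i, rfl⟩
    · exact LinearIndependent.of_comp S.1.subtype F.1.2.1
  invFun f' := by
    refine ⟨⟨fun i => (f'.1 i : V n), ?_, ?_⟩, ?_⟩
    · exact f'.2.map' S.1.subtype (Submodule.ker_subtype _)
    · intro i j; exact S.2.2 _ (f'.1 i).2 _ (f'.1 j).2
    · apply Subtype.ext
      show Submodule.span (ZMod 2) (Set.range (fun i => ((f'.1 i : V n)))) = S.1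
      haveI : FiniteDimensional (ZMod 2) S.1 := Module.Finite.of_finite
      have htop : Submodule.span (ZMod 2) (Set.range f'.1) = ⊤ :=
        f'.2.span_eq_top_of_card_eq_finrank' (by rw [Fintype.card_fin, S.2.1])
      have hr : Set.range (fun i => ((f'.1 i : V n))) = S.1.subtype '' Set.range f'.1 :=
        Set.range_comp _ _
      rw [hr, ← Submodule.map_span, htop, Submodule.map_subtype_top]
  left_inv F := Subtype.ext (Subtype.ext rfl)
  right_inv f' := Subtype.ext (funext fun i => Subtype.ext rfl)

lemma cardB (n m : ℕ) :
    Nat.card (isoT n m) = Nat.card (Sub n m) * ∏ a ∈ Finset.range m, (2 ^ m - 2 ^ a) := by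
  classical
  letI : Fintype (Sub n m) := Fintype.ofFinite _
  rw [Nat.card_congr (Equiv.sigmaFiberEquiv (PhiB n m)).symm]
  letI : ∀ S : Sub n m, Fintype {f : isoT n m // PhiB n m f = S} :=
    fun S => Fintype.ofFinite _
  rw [Nat.card_eq_fintype_card, Fintype.card_sigma]
  have key : ∀ S : Sub n m, Fintype.card {f : isoT n m // PhiB n m f = S} =
      ∏ a ∈ Finset.range m, (2 ^ m - 2 ^ a) := by
    intro S
    rw [← Nat.card_eq_fintype_card, Nat.card_congr (fiberEquivB n m S),
      card_linearIndependent (K := ZMod 2) (by rw [S.2.1])]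
    rw [ZMod.card, S.2.1]
    exact Fin.prod_univ_eq_prod_range (fun a => 2 ^ m - 2 ^ a) m
  simp only [key, Finset.sum_const, Finset.card_univ, smul_eq_mul, Nat.card_eq_fintype_card]

end Stmt16

theorem stmt_16 (n m : ℕ) (hm : m ≤ n) :
    Nat.card {S : Submodule (ZMod 2) ((Fin n → ZMod 2) × (Fin n → ZMod 2)) //
        Module.finrank (ZMod 2) S = m ∧ ∀ x ∈ S, ∀ y ∈ S, symp x y = 0} *
      ∏ a ∈ Finset.range m, (2 ^ m - 2 ^ a) =
      ∏ a ∈ Finset.range m, (2 ^ (2 * n - a) - 2 ^ a) := by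
  have h := Stmt16.cardB n m
  rw [Stmt16.cardA n m] at h
  exact h.symm
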